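/- Let O be a finite set, let P, Q, R be probability mass functions on O, and let ε, ε', δ, δ' ≥ 0. If P ≈_{ε',δ'} Q and Q ≈_{ε,δ} R, then P ≈_{ε+ε', e^ε·δ' + e^{ε'}·δ} R. -/
import Mathlib


open scoped BigOperators Classical

noncomputable section

/-- `P` is a probability mass function on a finite type. -/
def IsPMF {α : Type} [Fintype α] (P : α → ℝ) : Prop :=
  (∀ a, 0 ≤ P a) ∧ ∑ a, P a = 1

/-- The `e^ε`-hockey-stick divergence between pmfs on a finite type. -/
def hsDiv {O : Type} [Fintype O] (ε : ℝ) (P Q : O → ℝ) : ℝ :=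
  ∑ o, max (P o - Real.exp ε * Q o) 0

/-- `P ≈_{ε,δ} Q`: both hockey-stick divergences are at most `δ`. -/
def Indis {O : Type} [Fintype O] (ε δ : ℝ) (P Q : O → ℝ) : Prop :=
  hsDiv ε P Q ≤ δ ∧ hsDiv ε Q P ≤ δ

lemma hsDiv_tri {O : Type} [Fintype O] (ε ε' : ℝ) (P Q R : O → ℝ) :
    hsDiv (ε + ε') P R ≤ hsDiv ε' P Q + Real.exp ε' * hsDiv ε Q R := by
  unfold hsDiv
  rw [Finset.mul_sum, ← Finset.sum_add_distrib]
  apply Finset.sum_le_sum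
  intro o _
  have he : (0:ℝ) ≤ Real.exp ε' := (Real.exp_pos ε').le
  have h1 : P o - Real.exp (ε + ε') * R o
      = (P o - Real.exp ε' * Q o) + Real.exp ε' * (Q o - Real.exp ε * R o) := by
    rw [Real.exp_add]; ring
  rw [h1]
  have h2 : Real.exp ε' * max (Q o - Real.exp ε * R o) 0
      = max (Real.exp ε' * (Q o - Real.exp ε * R o)) 0 := by
    rw [mul_max_of_nonneg _ _ he, mul_zero]
  rw [h2]
  apply max_le
  · exact add_le_add (le_max_left _ _) (le_max_left _ _)
  · positivity

/-- "Triangle inequality" for approximate indistinguishability. -/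
theorem indis_triangle {O : Type} [Fintype O]
    (P Q R : O → ℝ) (hP : IsPMF P) (hQ : IsPMF Q) (hR : IsPMF R)
    (ε ε' δ δ' : ℝ) (hε : 0 ≤ ε) (hε' : 0 ≤ ε') (hδ : 0 ≤ δ) (hδ' : 0 ≤ δ')
    (h1 : Indis ε' δ' P Q) (h2 : Indis ε δ Q R) :
    Indis (ε + ε') (Real.exp ε * δ' + Real.exp ε' * δ) P R := by
  have heε : (1:ℝ) ≤ Real.exp ε := Real.one_le_exp hε
  have heε' : (1:ℝ) ≤ Real.exp ε' := Real.one_le_exp hε'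
  constructor
  · calc hsDiv (ε + ε') P R ≤ hsDiv ε' P Q + Real.exp ε' * hsDiv ε Q R :=
          hsDiv_tri ε ε' P Q R
      _ ≤ δ' + Real.exp ε' * δ := by
          gcongr
          · exact h1.1
          · exact h2.1
      _ ≤ Real.exp ε * δ' + Real.exp ε' * δ := by nlinarith
  · calc hsDiv (ε + ε') R P = hsDiv (ε' + ε) R P := by rw [add_comm]
      _ ≤ hsDiv ε R Q + Real.exp ε * hsDiv ε' Q P := hsDiv_tri ε' ε R Q P
      _ ≤ δ + Real.exp ε * δ' := by
          gcongr
          · exact h2.2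
          · exact h1.2
      _ ≤ Real.exp ε * δ' + Real.exp ε' * δ := by nlinarith
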